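/- Let (V,E) be a directed tree and λ, μ weights. If B_λ is a bounded operator on ℓ^p(V,μ) for some 1 ≤ p < ∞, then under the dual pairing ⟨f,g⟩ = ∑_{v∈V} f(v) conj(g(v)), the adjoint of B_λ is the weighted forward shift S_{conj(λ)} acting on ℓ^{p*}(V, 1/conj(μ)). -/

import Mathlib

open scoped ENNReal
open Filter

/-- Iterated parent map of a partially defined parent function. -/
def parIter {V : Type*} (par : V → Option V) : ℕ → V → Option V
  | 0, v => some v
  | n + 1, v => (par v).bind (parIter par n)

/-- A directed tree: each vertex has at most one parent (the map `par`),
the graph is connected (any two vertices have a common ancestor), and has no cycles. -/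
structure DirTree (V : Type*) : Type _ where
  par : V → Option V
  connected : ∀ u v : V, ∃ m n : ℕ, ∃ w : V,
    parIter par m u = some w ∧ parIter par n v = some w
  acyclic : ∀ (v : V) (n : ℕ), parIter par (n + 1) v ≠ some v

namespace DirTree

variable {V : Type*} (t : DirTree V)

/-- The set of children of a vertex. -/
def children (v : V) : Set V := {u | t.par u = some v}

/-- `desc n v` is `Chi^n(v)`, the set of `n`-th generation descendants of `v`. -/
def desc (n : ℕ) (v : V) : Set V := {u | parIter t.par n u = some v}

def IsRoot (v : V) : Prop := t.par v = none

def Rooted : Prop := ∃ v, t.IsRoot v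

def Unrooted : Prop := ∀ v : V, t.par v ≠ none

/-- The tree has no leaves: every vertex has a child. -/
def Leafless : Prop := ∀ v : V, ∃ u, t.par u = some v

variable {𝕂 : Type*} [RCLike 𝕂]

/-- The weighted backward shift `B_λ`: `(B_λ f)(v) = ∑_{u ∈ Chi(v)} λ_u f(u)`. -/
noncomputable def bshift (lam : V → 𝕂) (f : V → 𝕂) : V → 𝕂 :=
  fun v => ∑' u : t.children v, lam u * f u

/-- The weighted forward shift `S_λ`: `(S_λ f)(v) = λ_v f(par v)` for `v ≠ root`, `0` at the root. -/
noncomputable def fshift (lam : V → 𝕂) (f : V → 𝕂) : V → 𝕂 :=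
  fun v => (t.par v).elim 0 (fun w => lam v * f w)

/-- `wprod lam n u = λ(par^n(u) → u)`, the product of the weights along the branch
from `par^n(u)` down to `u`. -/
noncomputable def wprod (lam : V → 𝕂) (n : ℕ) (u : V) : 𝕂 :=
  ∏ k ∈ Finset.range n, ((parIter t.par k u).elim 1 lam)

end DirTree

/-- The `ℓ^p(V,μ)`-norm (with values in `ℝ≥0∞`): for `p = ∞` the weighted sup norm,
otherwise `(∑_v ‖f(v) μ_v‖^p)^{1/p}`. -/
noncomputable def enormW {V 𝕂 : Type*} [RCLike 𝕂] (μ : V → 𝕂) (p : ℝ≥0∞) (f : V → 𝕂) :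
    ℝ≥0∞ :=
  if p = ∞ then ⨆ v, (‖μ v * f v‖₊ : ℝ≥0∞)
  else (∑' v, (‖μ v * f v‖₊ : ℝ≥0∞) ^ p.toReal) ^ (1 / p.toReal)

/-- Membership in `ℓ^p(V,μ)`. -/
def MemWLp {V 𝕂 : Type*} [RCLike 𝕂] (μ : V → 𝕂) (p : ℝ≥0∞) (f : V → 𝕂) : Prop :=
  enormW μ p f ≠ ∞

/-- Membership in `c₀(V,μ)`: the weighted function vanishes at infinity. -/
def MemC0 {V 𝕂 : Type*} [RCLike 𝕂] (μ : V → 𝕂) (f : V → 𝕂) : Prop :=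
  Tendsto (fun v => ‖μ v * f v‖) cofinite (nhds 0)

/-- `T` is a bounded operator with respect to the norm `nrm`. -/
def BoundedOn {V 𝕂 : Type*} [RCLike 𝕂] (T : (V → 𝕂) → (V → 𝕂))
    (nrm : (V → 𝕂) → ℝ≥0∞) : Prop :=
  ∃ C : ℝ≥0∞, C ≠ ∞ ∧ ∀ f, nrm (T f) ≤ C * nrm f

/-- The operator norm of `T` with respect to the norm `nrm`. -/
noncomputable def opNorm {V 𝕂 : Type*} [RCLike 𝕂] (T : (V → 𝕂) → (V → 𝕂))
    (nrm : (V → 𝕂) → ℝ≥0∞) : ℝ≥0∞ :=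
  sInf {C : ℝ≥0∞ | ∀ f, nrm (T f) ≤ C * nrm f}

/-- `T` is hypercyclic on the space `{f | mem f}` with metric induced by `nrm`:
some `f` in the space has dense orbit. -/
def HypercyclicOn {V 𝕂 : Type*} [RCLike 𝕂] (T : (V → 𝕂) → (V → 𝕂))
    (mem : (V → 𝕂) → Prop) (nrm : (V → 𝕂) → ℝ≥0∞) : Prop :=
  ∃ f, mem f ∧ ∀ g, mem g → ∀ ε : ℝ≥0∞, 0 < ε → ∃ n : ℕ, nrm (T^[n] f - g) < ε

/-- `T` is weakly mixing: `T ⊕ T` is hypercyclic on the product. -/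
def WeaklyMixingOn {V 𝕂 : Type*} [RCLike 𝕂] (T : (V → 𝕂) → (V → 𝕂))
    (mem : (V → 𝕂) → Prop) (nrm : (V → 𝕂) → ℝ≥0∞) : Prop :=
  ∃ f₁ f₂, mem f₁ ∧ mem f₂ ∧ ∀ g₁ g₂, mem g₁ → mem g₂ → ∀ ε : ℝ≥0∞, 0 < ε →
    ∃ n : ℕ, nrm (T^[n] f₁ - g₁) < ε ∧ nrm (T^[n] f₂ - g₂) < ε

/-- `T` is (topologically) mixing on the space `{f | mem f}`. -/
def MixingOn {V 𝕂 : Type*} [RCLike 𝕂] (T : (V → 𝕂) → (V → 𝕂))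
    (mem : (V → 𝕂) → Prop) (nrm : (V → 𝕂) → ℝ≥0∞) : Prop :=
  ∀ f g, mem f → mem g → ∀ ε : ℝ≥0∞, 0 < ε →
    ∃ N : ℕ, ∀ n ≥ N, ∃ h, mem h ∧ nrm (h - f) < ε ∧ nrm (T^[n] h - g) < ε

open scoped NNReal

lemma ofReal_norm_eq_coe_nnnorm {E : Type*} [SeminormedAddCommGroup E] (a : E) :
    ENNReal.ofReal ‖a‖ = (‖a‖₊ : ℝ≥0∞) := ENNReal.ofReal_eq_coe_nnreal _

/-- Hölder's inequality for `tsum`s in `ℝ≥0∞`. -/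
lemma ennreal_inner_le_Lp_mul_Lq_tsum {ι : Type*} (f g : ι → ℝ≥0∞) {p q : ℝ}
    (hpq : Real.HolderConjugate p q) :
    ∑' i, f i * g i ≤ (∑' i, f i ^ p) ^ (1 / p) * (∑' i, g i ^ q) ^ (1 / q) := by
  rw [ENNReal.tsum_eq_iSup_sum]
  refine iSup_le fun s => (ENNReal.inner_le_Lp_mul_Lq s f g hpq).trans ?_
  refine mul_le_mul' ?_ ?_
  · exact ENNReal.rpow_le_rpow (ENNReal.sum_le_tsum s) hpq.one_div_nonneg
  · exact ENNReal.rpow_le_rpow (ENNReal.sum_le_tsum s) hpq.symm.one_div_nonneg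

/-- if `B_λ` is bounded on `ℓ^p(V,μ)`, `1 ≤ p < ∞`, then under the dual
pairing `⟨f,g⟩ = ∑_v f(v) conj(g(v))`, the adjoint of `B_λ` is the weighted forward
shift `S_{conj(λ)}` acting on `ℓ^{p*}(V, 1/conj(μ))`. -/
theorem stmt7 {V : Type*} [Countable V] {𝕂 : Type*} [RCLike 𝕂] (t : DirTree V)
    (lam μ : V → 𝕂) (hlam : ∀ v, lam v ≠ 0) (hμ : ∀ v, μ v ≠ 0)
    (p q : ℝ≥0∞) (hp : 1 ≤ p) (hp' : p ≠ ∞) (hpq : 1 / p + 1 / q = 1)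
    (hbd : BoundedOn (t.bshift lam) (enormW μ p)) :
    ∀ f g : V → 𝕂, MemWLp μ p f →
      MemWLp (fun v => (starRingEnd 𝕂 (μ v))⁻¹) q g →
      ∑' v, t.bshift lam f v * starRingEnd 𝕂 (g v)
        = ∑' v, f v * starRingEnd 𝕂
            (t.fshift (fun u => starRingEnd 𝕂 (lam u)) g v) := by
  classical
  intro f g hf hg
  replace hf : enormW μ p f ≠ ∞ := hf
  replace hg : enormW (fun v => (starRingEnd 𝕂 (μ v))⁻¹) q g ≠ ∞ := hg
  obtain ⟨C, hC, hCle⟩ := hbd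
  set p' := p.toReal with hp'def
  have hp1R : (1:ℝ) ≤ p' := by
    rw [hp'def, ← ENNReal.toReal_one]
    exact ENNReal.toReal_mono hp' hp
  have hp'0 : (0:ℝ) < p' := lt_of_lt_of_le one_pos hp1R
  have hfsum : (∑' u, (‖μ u * f u‖₊ : ℝ≥0∞) ^ p') ≠ ∞ := by
    intro h
    exact hf (by rw [enormW, if_neg hp', ← hp'def, h,
      ENNReal.top_rpow_of_pos (by positivity)])
  -- Step A : finite test functions
  have key : ∀ (v : V) (s : Finset V), (∀ u ∈ s, u ∈ t.children v) →
      (‖μ v‖₊ : ℝ≥0∞) * ∑ u ∈ s, (‖lam u * f u‖₊ : ℝ≥0∞)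
        ≤ C * (∑ u ∈ s, (‖μ u * f u‖₊ : ℝ≥0∞) ^ p') ^ (1 / p') := by
    intro v s hs
    set F : V → 𝕂 := fun u => if u ∈ s then ((‖lam u * f u‖ : ℝ) : 𝕂) / lam u else 0 with hF
    have hFn : ∀ u ∈ s, ‖F u‖ = ‖f u‖ := by
      intro u hu
      simp only [hF, if_pos hu]
      rw [norm_div, RCLike.norm_ofReal, abs_of_nonneg (norm_nonneg _), norm_mul,
        mul_div_cancel_left₀ _ (norm_ne_zero_iff.mpr (hlam u))]
    have hFnn : ∀ u ∈ s, (‖μ u * F u‖₊ : ℝ≥0∞) = (‖μ u * f u‖₊ : ℝ≥0∞) := by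
      intro u hu
      have h2 : ‖μ u * F u‖ = ‖μ u * f u‖ := by rw [norm_mul, norm_mul, hFn u hu]
      rw [← norm_toNNReal, h2, norm_toNNReal]
    have hFe : enormW μ p F = (∑ u ∈ s, (‖μ u * f u‖₊ : ℝ≥0∞) ^ p') ^ (1 / p') := by
      rw [enormW, if_neg hp', ← hp'def]
      congr 1
      rw [tsum_eq_sum (s := s) ?_]
      · exact Finset.sum_congr rfl fun u hu => by rw [hFnn u hu]
      · intro u hu
        simp only [hF, if_neg hu, mul_zero, nnnorm_zero, ENNReal.coe_zero]
        exact ENNReal.zero_rpow_of_pos hp'0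
    have hBF : t.bshift lam F v = ((∑ u ∈ s, ‖lam u * f u‖ : ℝ) : 𝕂) := by
      show (∑' u : t.children v, lam (u : V) * F u) = _
      set s' : Finset (t.children v) :=
        s.attach.map ⟨fun u => ⟨u.1, hs u.1 u.2⟩,
          by intro a b h; exact Subtype.ext (Subtype.mk.inj h)⟩ with hs'
      rw [tsum_eq_sum (s := s') ?_]
      · rw [hs', Finset.sum_map]
        change ∑ u ∈ s.attach, lam u.1 * F u.1 = _
        rw [show (∑ u ∈ s.attach, lam u.1 * F u.1)
            = ∑ u ∈ s.attach, ((‖lam u.1 * f u.1‖ : ℝ) : 𝕂) from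
          Finset.sum_congr rfl fun u _ => by
            simp only [hF, if_pos u.2]
            rw [mul_div_cancel₀ _ (hlam u.1)]]
        rw [Finset.sum_attach s (fun u => ((‖lam u * f u‖ : ℝ) : 𝕂))]
        exact (RCLike.ofReal_sum _ _).symm
      · intro x hx
        have hxs : (x : V) ∉ s := by
          intro hmem
          exact hx (by
            rw [hs', Finset.mem_map]
            exact ⟨⟨(x : V), hmem⟩, Finset.mem_attach _ _, Subtype.ext rfl⟩)
        simp only [hF, if_neg hxs, mul_zero]
    have hnormBF : (‖μ v * t.bshift lam F v‖₊ : ℝ≥0∞)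
        = (‖μ v‖₊ : ℝ≥0∞) * ∑ u ∈ s, (‖lam u * f u‖₊ : ℝ≥0∞) := by
      rw [nnnorm_mul, ENNReal.coe_mul, hBF]
      congr 1
      rw [← ofReal_norm_eq_coe_nnnorm, RCLike.norm_ofReal,
        abs_of_nonneg (Finset.sum_nonneg fun u _ => norm_nonneg _),
        ENNReal.ofReal_sum_of_nonneg (fun u _ => norm_nonneg _)]
      exact Finset.sum_congr rfl fun u _ => ofReal_norm_eq_coe_nnnorm _
    have h1 : (‖μ v * t.bshift lam F v‖₊ : ℝ≥0∞) ≤ enormW μ p (t.bshift lam F) := by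
      rw [enormW, if_neg hp', ← hp'def]
      have heq : (‖μ v * t.bshift lam F v‖₊ : ℝ≥0∞)
          = ((‖μ v * t.bshift lam F v‖₊ : ℝ≥0∞) ^ p') ^ (1 / p') := by
        rw [← ENNReal.rpow_mul, mul_one_div_cancel hp'0.ne', ENNReal.rpow_one]
      rw [heq]
      exact ENNReal.rpow_le_rpow (ENNReal.le_tsum v) (by positivity)
    calc (‖μ v‖₊ : ℝ≥0∞) * ∑ u ∈ s, (‖lam u * f u‖₊ : ℝ≥0∞)
        = (‖μ v * t.bshift lam F v‖₊ : ℝ≥0∞) := hnormBF.symm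
      _ ≤ enormW μ p (t.bshift lam F) := h1
      _ ≤ C * enormW μ p F := hCle F
      _ = C * (∑ u ∈ s, (‖μ u * f u‖₊ : ℝ≥0∞) ^ p') ^ (1 / p') := by rw [hFe]
  -- Step B : tsum version over children
  have keyT : ∀ v : V,
      (‖μ v‖₊ : ℝ≥0∞) * (∑' u : t.children v, (‖lam (u : V) * f u‖₊ : ℝ≥0∞))
        ≤ C * (∑' u : t.children v, (‖μ (u : V) * f u‖₊ : ℝ≥0∞) ^ p') ^ (1 / p') := by
    intro v
    rw [ENNReal.tsum_eq_iSup_sum, ENNReal.mul_iSup]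
    refine iSup_le fun s' => ?_
    have himg : ∑ x ∈ s', (‖lam (x : V) * f x‖₊ : ℝ≥0∞)
        = ∑ u ∈ s'.image (Subtype.val), (‖lam u * f u‖₊ : ℝ≥0∞) := by
      rw [Finset.sum_image (fun a _ b _ h => Subtype.ext h)]
    rw [himg]
    refine (key v (s'.image Subtype.val) ?_).trans ?_
    · intro u hu
      obtain ⟨x, _, rfl⟩ := Finset.mem_image.mp hu
      exact x.2
    · refine mul_le_mul_right (ENNReal.rpow_le_rpow ?_ (by positivity)) C
      have himg2 : ∑ u ∈ s'.image Subtype.val, (‖μ u * f u‖₊ : ℝ≥0∞) ^ p'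
          = ∑ x ∈ s', (‖μ (x : V) * f x‖₊ : ℝ≥0∞) ^ p' :=
        Finset.sum_image (fun a _ b _ h => Subtype.ext h)
      rw [himg2]
      exact ENNReal.sum_le_tsum s'
  -- injective map from the sigma type of children to V
  have einj : Function.Injective (fun x : Σ v : V, t.children v => (x.2 : V)) := by
    rintro ⟨v₁, u₁, hu₁⟩ ⟨v₂, u₂, hu₂⟩ h
    simp only at h
    subst h
    have h₁ : t.par u₁ = some v₁ := hu₁
    have h₂ : t.par u₁ = some v₂ := hu₂
    obtain rfl : v₁ = v₂ := Option.some_injective V (h₁.symm.trans h₂)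
    rfl
  -- sum of the p-sums over children is finite
  have hSvsum : (∑' v, ∑' u : t.children v, (‖μ (u : V) * f u‖₊ : ℝ≥0∞) ^ p')
      ≤ ∑' u, (‖μ u * f u‖₊ : ℝ≥0∞) ^ p' := by
    rw [← ENNReal.tsum_sigma' (fun x : Σ v : V, t.children v =>
      (‖μ (x.2 : V) * f x.2‖₊ : ℝ≥0∞) ^ p')]
    exact ENNReal.tsum_comp_le_tsum_of_injective einj
      (fun u => (‖μ u * f u‖₊ : ℝ≥0∞) ^ p')
  -- weighted norm of g
  have hGv : ∀ v, (‖g v‖₊ : ℝ≥0∞)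
      = (‖μ v‖₊ : ℝ≥0∞) * (‖(starRingEnd 𝕂 (μ v))⁻¹ * g v‖₊ : ℝ≥0∞) := by
    intro v
    have h2 : (‖g v‖₊ : ℝ≥0) = ‖μ v‖₊ * ‖(starRingEnd 𝕂 (μ v))⁻¹ * g v‖₊ := by
      rw [nnnorm_mul, nnnorm_inv, RCLike.nnnorm_conj,
        mul_inv_cancel_left₀ (nnnorm_ne_zero_iff.mpr (hμ v))]
    rw [← ENNReal.coe_mul]
    exact_mod_cast congrArg (fun x : ℝ≥0 => (x : ℝ≥0∞)) h2
  -- pointwise bound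
  have hbound : ∀ v, (‖g v‖₊ : ℝ≥0∞) *
      (∑' u : t.children v, (‖lam (u : V) * f u‖₊ : ℝ≥0∞))
      ≤ C * ((‖(starRingEnd 𝕂 (μ v))⁻¹ * g v‖₊ : ℝ≥0∞) *
        (∑' u : t.children v, (‖μ (u : V) * f u‖₊ : ℝ≥0∞) ^ p') ^ (1 / p')) := by
    intro v
    rw [hGv v]
    calc (‖μ v‖₊ : ℝ≥0∞) * (‖(starRingEnd 𝕂 (μ v))⁻¹ * g v‖₊ : ℝ≥0∞) *
          (∑' u : t.children v, (‖lam (u : V) * f u‖₊ : ℝ≥0∞))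
        = (‖(starRingEnd 𝕂 (μ v))⁻¹ * g v‖₊ : ℝ≥0∞) *
          ((‖μ v‖₊ : ℝ≥0∞) * ∑' u : t.children v, (‖lam (u : V) * f u‖₊ : ℝ≥0∞)) := by
          ring
      _ ≤ (‖(starRingEnd 𝕂 (μ v))⁻¹ * g v‖₊ : ℝ≥0∞) *
          (C * (∑' u : t.children v, (‖μ (u : V) * f u‖₊ : ℝ≥0∞) ^ p') ^ (1 / p')) :=
          mul_le_mul_right (keyT v) _
      _ = C * ((‖(starRingEnd 𝕂 (μ v))⁻¹ * g v‖₊ : ℝ≥0∞) *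
          (∑' u : t.children v, (‖μ (u : V) * f u‖₊ : ℝ≥0∞) ^ p') ^ (1 / p')) := by
          ring
  -- finiteness of the Hölder-type sum
  have hfin2 : (∑' v, (‖(starRingEnd 𝕂 (μ v))⁻¹ * g v‖₊ : ℝ≥0∞) *
      (∑' u : t.children v, (‖μ (u : V) * f u‖₊ : ℝ≥0∞) ^ p') ^ (1 / p')) ≠ ∞ := by
    by_cases hp1 : p = 1
    · -- p = 1, q = ∞
      have hq : q = ∞ := by
        rw [hp1] at hpq
        have h0 : (1 : ℝ≥0∞) + 1 / q = 1 + 0 := by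
          rw [add_zero]
          simpa using hpq
        have h1 := (ENNReal.add_right_inj ENNReal.one_ne_top).mp h0
        rwa [one_div, ENNReal.inv_eq_zero] at h1
      have hp'1 : p' = 1 := by rw [hp'def, hp1, ENNReal.toReal_one]
      have hrp : ∀ a : ℝ≥0∞, a ^ (1 / p') = a := by
        intro a
        rw [hp'1]
        norm_num
      rw [hq, enormW, if_pos rfl] at hg
      have hg' : (⨆ w, (‖(starRingEnd 𝕂 (μ w))⁻¹ * g w‖₊ : ℝ≥0∞)) ≠ ⊤ := hg
      simp only [hrp]
      refine ne_top_of_le_ne_top (ENNReal.mul_ne_top hg'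
        (ne_top_of_le_ne_top hfsum hSvsum)) ?_
      calc (∑' v, (‖(starRingEnd 𝕂 (μ v))⁻¹ * g v‖₊ : ℝ≥0∞) *
            (∑' u : t.children v, (‖μ (u : V) * f u‖₊ : ℝ≥0∞) ^ p'))
          ≤ ∑' v, (⨆ w, (‖(starRingEnd 𝕂 (μ w))⁻¹ * g w‖₊ : ℝ≥0∞)) *
            (∑' u : t.children v, (‖μ (u : V) * f u‖₊ : ℝ≥0∞) ^ p') := by
            refine ENNReal.tsum_le_tsum fun v => mul_le_mul_left ?_ _
            exact le_iSup (fun w => ((‖(starRingEnd 𝕂 (μ w))⁻¹ * g w‖₊ : ℝ≥0∞))) v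
        _ = _ := ENNReal.tsum_mul_left
    · -- 1 < p, conjugate exponents
      have hplt : 1 < p := lt_of_le_of_ne hp (Ne.symm hp1)
      have hq' : q ≠ ∞ := by
        intro hq
        rw [hq] at hpq
        simp only [one_div, ENNReal.inv_top, add_zero, ENNReal.inv_eq_one] at hpq
        exact hp1 hpq
      have h1p : 1 / p ≠ ∞ :=
        ne_top_of_le_ne_top ENNReal.one_ne_top (le_of_le_of_eq le_self_add hpq)
      have h1q : 1 / q ≠ ∞ :=
        ne_top_of_le_ne_top ENNReal.one_ne_top (le_of_le_of_eq le_add_self hpq)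
      have htr : p'⁻¹ + q.toReal⁻¹ = 1 := by
        have h2 := congrArg ENNReal.toReal hpq
        rw [ENNReal.toReal_add h1p h1q, ENNReal.toReal_one] at h2
        simpa [one_div, ENNReal.toReal_inv, hp'def] using h2
      have hcj : p'.HolderConjugate q.toReal := by
        refine Real.holderConjugate_iff.mpr ⟨?_, htr⟩
        rw [hp'def, ← ENNReal.toReal_one]
        exact (ENNReal.toReal_lt_toReal ENNReal.one_ne_top hp').mpr hplt
      have hq'0 : (0:ℝ) < q.toReal := hcj.symm.pos
      have hgsum : (∑' v, (‖(starRingEnd 𝕂 (μ v))⁻¹ * g v‖₊ : ℝ≥0∞) ^ q.toReal) ≠ ∞ := by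
        intro h
        apply hg
        rw [enormW, if_neg hq']
        have h2 : (∑' v, (‖(fun v => (starRingEnd 𝕂 (μ v))⁻¹) v * g v‖₊ : ℝ≥0∞)
            ^ q.toReal) = ⊤ := h
        rw [h2, ENNReal.top_rpow_of_pos (by positivity)]
      have hSimp : ∀ v, ((∑' u : t.children v,
          (‖μ (u : V) * f u‖₊ : ℝ≥0∞) ^ p') ^ (1 / p')) ^ p'
          = ∑' u : t.children v, (‖μ (u : V) * f u‖₊ : ℝ≥0∞) ^ p' := by
        intro v
        rw [← ENNReal.rpow_mul, one_div, inv_mul_cancel₀ hp'0.ne', ENNReal.rpow_one]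
      have hhold : (∑' v, (‖(starRingEnd 𝕂 (μ v))⁻¹ * g v‖₊ : ℝ≥0∞) *
          (∑' u : t.children v, (‖μ (u : V) * f u‖₊ : ℝ≥0∞) ^ p') ^ (1 / p'))
          ≤ (∑' v, ((∑' u : t.children v,
              (‖μ (u : V) * f u‖₊ : ℝ≥0∞) ^ p') ^ (1 / p')) ^ p') ^ (1 / p') *
            (∑' v, (‖(starRingEnd 𝕂 (μ v))⁻¹ * g v‖₊ : ℝ≥0∞) ^ q.toReal) ^ (1 / q.toReal) := by
        rw [tsum_congr (fun v => mul_comm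
          ((‖(starRingEnd 𝕂 (μ v))⁻¹ * g v‖₊ : ℝ≥0∞))
          ((∑' u : t.children v, (‖μ (u : V) * f u‖₊ : ℝ≥0∞) ^ p') ^ (1 / p')))]
        exact ennreal_inner_le_Lp_mul_Lq_tsum _ _ hcj
      refine ne_top_of_le_ne_top (ENNReal.mul_ne_top ?_ ?_) hhold
      · refine ENNReal.rpow_ne_top_of_nonneg (by positivity) ?_
        rw [tsum_congr hSimp]
        exact ne_top_of_le_ne_top hfsum hSvsum
      · exact ENNReal.rpow_ne_top_of_nonneg (by positivity) hgsum
  -- total finiteness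
  have hfin : (∑' v, (‖g v‖₊ : ℝ≥0∞) *
      (∑' u : t.children v, (‖lam (u : V) * f u‖₊ : ℝ≥0∞))) ≠ ∞ := by
    refine ne_top_of_le_ne_top (ENNReal.mul_ne_top hC hfin2) ?_
    calc (∑' v, (‖g v‖₊ : ℝ≥0∞) *
          (∑' u : t.children v, (‖lam (u : V) * f u‖₊ : ℝ≥0∞)))
        ≤ ∑' v, C * ((‖(starRingEnd 𝕂 (μ v))⁻¹ * g v‖₊ : ℝ≥0∞) *
          (∑' u : t.children v, (‖μ (u : V) * f u‖₊ : ℝ≥0∞) ^ p') ^ (1 / p')) :=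
          ENNReal.tsum_le_tsum hbound
      _ = _ := ENNReal.tsum_mul_left
  -- summability over the sigma type
  have hsig : (∑' x : Σ v : V, t.children v,
      (‖lam (x.2 : V) * f x.2 * starRingEnd 𝕂 (g x.1)‖₊ : ℝ≥0∞)) ≠ ∞ := by
    rw [ENNReal.tsum_sigma' (fun x : Σ v : V, t.children v =>
      (‖lam (x.2 : V) * f x.2 * starRingEnd 𝕂 (g x.1)‖₊ : ℝ≥0∞))]
    have heq : ∀ v, (∑' u : t.children v,
        (‖lam (u : V) * f u * starRingEnd 𝕂 (g v)‖₊ : ℝ≥0∞))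
        = (‖g v‖₊ : ℝ≥0∞) * ∑' u : t.children v, (‖lam (u : V) * f u‖₊ : ℝ≥0∞) := by
      intro v
      rw [← ENNReal.tsum_mul_left]
      refine tsum_congr fun u => ?_
      rw [nnnorm_mul, ENNReal.coe_mul, RCLike.nnnorm_conj]
      ring
    rw [tsum_congr heq]
    exact hfin
  have hsum : Summable (fun x : Σ v : V, t.children v =>
      lam (x.2 : V) * f x.2 * starRingEnd 𝕂 (g x.1)) :=
    Summable.of_nnnorm (ENNReal.tsum_coe_ne_top_iff_summable.mp hsig)
  -- final computation
  calc ∑' v, t.bshift lam f v * starRingEnd 𝕂 (g v)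
      = ∑' v, ∑' u : t.children v, lam (u : V) * f u * starRingEnd 𝕂 (g v) := by
        refine tsum_congr fun v => ?_
        exact tsum_mul_right.symm
    _ = ∑' x : Σ v : V, t.children v, lam (x.2 : V) * f x.2 * starRingEnd 𝕂 (g x.1) :=
        (hsum.tsum_sigma).symm
    _ = ∑' x : Σ v : V, t.children v, f (x.2 : V) * starRingEnd 𝕂
          (t.fshift (fun u => starRingEnd 𝕂 (lam u)) g (x.2 : V)) := by
        refine tsum_congr ?_
        rintro ⟨v, u, hu⟩
        have hpar : t.par u = some v := hu
        simp only [DirTree.fshift, hpar, Option.elim_some, map_mul, RCLike.conj_conj]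
        ring
    _ = ∑' v, f v * starRingEnd 𝕂 (t.fshift (fun u => starRingEnd 𝕂 (lam u)) g v) := by
        refine Function.Injective.tsum_eq einj
          (f := fun w => f w * starRingEnd 𝕂
            (t.fshift (fun u => starRingEnd 𝕂 (lam u)) g w)) ?_
        intro u hu
        rcases hpar : t.par u with _ | w
        · exfalso
          apply hu
          simp [DirTree.fshift, hpar]
        · exact ⟨⟨w, u, hpar⟩, rfl⟩
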